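/- Let f_1 ≤ ⋯ ≤ f_m be continuous real functions on an interval I such that at each t ∈ I one-sided derivatives ḟ_j^±(t) exist, are unilaterally continuous, and whenever f_{k−1}(t) < f_k(t) = ⋯ = f_{k+n−1}(t) < f_{k+n}(t) one has the crossing relation ḟ_j^+(t) = ḟ_{2k+n−j−1}^−(t) for k ≤ j ≤ k+n−1. If t is a point where some n-cluster K = {k,…,k+n−1} has positive p-value (i.e. ḟ_k^+(t) < ḟ_{k+n−1}^+(t)), then f_{k+n−1}(t') > f_k(t') for all t' ≠ t sufficiently close to t; consequently the set of such t is discrete (each such point is isolated), hence at most countable. -/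

import Mathlib

/-- `IsCluster f m k n t` : at the point `t`, the values `f_k(t) = ⋯ = f_{k+n−1}(t)`
form an `n`-cluster with entry `k` among `f_1 ≤ ⋯ ≤ f_m`, i.e.
`f_{k−1}(t) < f_k(t) = ⋯ = f_{k+n−1}(t) < f_{k+n}(t)`
(with the conventions `f_0 = −∞`, `f_{m+1} = +∞`). -/
def IsCluster (f : ℕ → ℝ → ℝ) (m k n : ℕ) (t : ℝ) : Prop :=
  1 ≤ k ∧ 1 ≤ n ∧ k + n - 1 ≤ m ∧
  (2 ≤ k → f (k - 1) t < f k t) ∧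
  (∀ j, k ≤ j → j ≤ k + n - 1 → f j t = f k t) ∧
  (k + n ≤ m → f (k + n - 1) t < f (k + n) t)

/-- at a point `t` where an `n`-cluster `K = {k, …, k+n−1}` has positive
`p`-value (`ḟ_k⁺(t) < ḟ_{k+n−1}⁺(t)`), the curves separate: `f_{k+n−1}(t') > f_k(t')`
for all `t' ≠ t` close to `t`; consequently the set of such points is at most
countable. -/
theorem hadamard_stmt10
    (m : ℕ) (hm : 1 ≤ m) (f : ℕ → ℝ → ℝ)
    (hcont : ∀ j, 1 ≤ j → j ≤ m → Continuous (f j))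
    (horder : ∀ t, ∀ j, 1 ≤ j → j + 1 ≤ m → f j t ≤ f (j + 1) t)
    (dp dm : ℕ → ℝ → ℝ)
    -- existence of the one-sided derivatives
    (hdp : ∀ j t, 1 ≤ j → j ≤ m →
      Filter.Tendsto (fun h : ℝ => (f j (t + h) - f j t) / h)
        (nhdsWithin 0 (Set.Ioi 0)) (nhds (dp j t)))
    (hdm : ∀ j t, 1 ≤ j → j ≤ m →
      Filter.Tendsto (fun h : ℝ => (f j (t + h) - f j t) / h)
        (nhdsWithin 0 (Set.Iio 0)) (nhds (dm j t)))
    -- unilateral continuity of the one-sided derivatives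
    (hdpcont : ∀ j t, 1 ≤ j → j ≤ m →
      Filter.Tendsto (fun h : ℝ => dp j (t + h)) (nhdsWithin 0 (Set.Ioi 0))
        (nhds (dp j t)))
    (hdmcont : ∀ j t, 1 ≤ j → j ≤ m →
      Filter.Tendsto (fun h : ℝ => dm j (t + h)) (nhdsWithin 0 (Set.Iio 0))
        (nhds (dm j t)))
    -- crossing relation on every cluster
    (hcross : ∀ t k n, IsCluster f m k n t →
      ∀ j, k ≤ j → j ≤ k + n - 1 → dp j t = dm (2 * k + n - j - 1) t) :
    (∀ t k n, IsCluster f m k n t → dp k t < dp (k + n - 1) t →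
      ∀ᶠ t' in nhdsWithin t {t}ᶜ, f k t' < f (k + n - 1) t') ∧
    Set.Countable {t : ℝ | ∃ k n, IsCluster f m k n t ∧ dp k t < dp (k + n - 1) t} := by
  have main : ∀ t k n, IsCluster f m k n t → dp k t < dp (k + n - 1) t →
      ∀ᶠ t' in nhdsWithin t {t}ᶜ, f k t' < f (k + n - 1) t' := by
    intro t k n hc hp
    obtain ⟨hk1, hn1, hKm, _, heq, _⟩ := hc
    set K := k + n - 1 with hKdef
    have hkK : k ≤ K := by omega
    have hK1 : 1 ≤ K := by omega
    have hkm : k ≤ m := by omega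
    have feq : f K t = f k t := heq K hkK le_rfl
    -- crossing relations
    have hcK : dp k t = dm K t := by
      have := hcross t k n ⟨hk1, hn1, hKm, ‹_›, heq, ‹_›⟩ k le_rfl hkK
      rwa [show 2 * k + n - k - 1 = K by omega] at this
    have hcKk : dp K t = dm k t := by
      have := hcross t k n ⟨hk1, hn1, hKm, ‹_›, heq, ‹_›⟩ K hkK le_rfl
      rwa [show 2 * k + n - K - 1 = k by omega] at this
    -- right-hand side
    have hRlim : Filter.Tendsto (fun h : ℝ => (f K (t + h) - f k (t + h)) / h)
        (nhdsWithin 0 (Set.Ioi 0)) (nhds (dp K t - dp k t)) := by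
      have h0 := (hdp K t hK1 hKm).sub (hdp k t hk1 hkm)
      refine h0.congr fun h => ?_
      rw [div_sub_div_same, feq]
      congr 1
      ring
    have hRpos : ∀ᶠ h in nhdsWithin (0:ℝ) (Set.Ioi 0), 0 < f K (t + h) - f k (t + h) := by
      have h1 := hRlim.eventually (eventually_gt_nhds (sub_pos.mpr hp))
      filter_upwards [h1, self_mem_nhdsWithin] with h hh hmem
      have hh0 : (0:ℝ) < h := hmem
      have := mul_pos hh hh0
      rwa [div_mul_cancel₀ _ hh0.ne'] at this
    have hmapR : Filter.Tendsto (fun t' : ℝ => t' - t) (nhdsWithin t (Set.Ioi t))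
        (nhdsWithin (0:ℝ) (Set.Ioi 0)) := by
      refine tendsto_nhdsWithin_of_tendsto_nhds_of_eventually_within _ ?_ ?_
      · exact ((continuous_id.sub continuous_const).tendsto' t 0 (by simp)).mono_left
          nhdsWithin_le_nhds
      · filter_upwards [self_mem_nhdsWithin] with x hx
        simpa [Set.mem_Ioi, sub_pos] using hx
    have hR : ∀ᶠ t' in nhdsWithin t (Set.Ioi t), f k t' < f K t' := by
      filter_upwards [hmapR.eventually hRpos] with t' ht'
      have he : t + (t' - t) = t' := by ring
      rw [he] at ht'
      linarith
    -- left-hand side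
    have hLlim : Filter.Tendsto (fun h : ℝ => (f K (t + h) - f k (t + h)) / h)
        (nhdsWithin 0 (Set.Iio 0)) (nhds (dm K t - dm k t)) := by
      have h0 := (hdm K t hK1 hKm).sub (hdm k t hk1 hkm)
      refine h0.congr fun h => ?_
      rw [div_sub_div_same, feq]
      congr 1
      ring
    have hLneg : ∀ᶠ h in nhdsWithin (0:ℝ) (Set.Iio 0), 0 < f K (t + h) - f k (t + h) := by
      have hneg : dm K t - dm k t < 0 := by rw [← hcK, ← hcKk]; linarith
      have h1 := hLlim.eventually (eventually_lt_nhds hneg)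
      filter_upwards [h1, self_mem_nhdsWithin] with h hh hmem
      have hh0 : h < 0 := hmem
      have := mul_pos_of_neg_of_neg hh hh0
      rwa [div_mul_cancel₀ _ hh0.ne] at this
    have hmapL : Filter.Tendsto (fun t' : ℝ => t' - t) (nhdsWithin t (Set.Iio t))
        (nhdsWithin (0:ℝ) (Set.Iio 0)) := by
      refine tendsto_nhdsWithin_of_tendsto_nhds_of_eventually_within _ ?_ ?_
      · exact ((continuous_id.sub continuous_const).tendsto' t 0 (by simp)).mono_left
          nhdsWithin_le_nhds
      · filter_upwards [self_mem_nhdsWithin] with x hx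
        simpa [Set.mem_Iio, sub_neg] using hx
    have hL : ∀ᶠ t' in nhdsWithin t (Set.Iio t), f k t' < f K t' := by
      filter_upwards [hmapL.eventually hLneg] with t' ht'
      have he : t + (t' - t) = t' := by ring
      rw [he] at ht'
      linarith
    have hsup : nhdsWithin t (Set.Iio t) ⊔ nhdsWithin t (Set.Ioi t)
        = nhdsWithin t {t}ᶜ := nhdsLT_sup_nhdsGT t
    rw [← hsup, Filter.eventually_sup]
    exact ⟨hL, hR⟩
  refine ⟨main, ?_⟩
  have hset : {t : ℝ | ∃ k n, IsCluster f m k n t ∧ dp k t < dp (k + n - 1) t}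
      = ⋃ (k : ℕ), ⋃ (n : ℕ),
        {t : ℝ | IsCluster f m k n t ∧ dp k t < dp (k + n - 1) t} := by
    ext t
    simp [Set.mem_iUnion]
  rw [hset]
  refine Set.countable_iUnion fun k => Set.countable_iUnion fun n => ?_
  set s : Set ℝ := {t : ℝ | IsCluster f m k n t ∧ dp k t < dp (k + n - 1) t} with hs
  haveI : DiscreteTopology s := by
    rw [discreteTopology_subtype_iff]
    intro x hx
    rw [Filter.inf_principal_eq_bot]
    obtain ⟨hc, hp⟩ := hx
    filter_upwards [main x k n hc hp] with t' ht'
    intro hts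
    obtain ⟨hc', _⟩ := hts
    have hkK : k ≤ k + n - 1 := by
      have := hc'.1; have := hc'.2.1; omega
    have := hc'.2.2.2.2.1 (k + n - 1) hkK le_rfl
    linarith
  exact Set.countable_coe_iff.mp (TopologicalSpace.separableSpace_iff_countable.mp inferInstance)
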